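/- Let f, n, m be natural numbers with n > 3f and m ≥ n − f. Let P be a multiset of real numbers with card P = n and let U be a sub-multiset of P with card U = m. Then the (n−f)-th smallest element of P lies in the range of U: min U ≤ P_(n−f) ≤ max U. -/

import Mathlib

/-- The k-th smallest element (1-indexed, counted with multiplicity) of a
multiset of real numbers. -/
noncomputable def nth (S : Multiset ℝ) (k : ℕ) : ℝ :=
  (S.sort (· ≤ ·)).getD (k - 1) 0

/-- The smallest element of a (nonempty) multiset of reals. -/
noncomputable def mmin (S : Multiset ℝ) : ℝ := nth S 1

/-- The largest element of a (nonempty) multiset of reals. -/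
noncomputable def mmax (S : Multiset ℝ) : ℝ := nth S S.card

/-- The diameter of a (nonempty) multiset of reals. -/
noncomputable def mdiam (S : Multiset ℝ) : ℝ := mmax S - mmin S

lemma fin_sm_le {m n : ℕ} (g : Fin m → Fin n) (hg : StrictMono g) :
    ∀ i : Fin m, (i : ℕ) ≤ (g i : ℕ) := by
  rintro ⟨k, hk⟩
  induction k with
  | zero => exact Nat.zero_le _
  | succ k ih =>
    have hk' : k < m := Nat.lt_of_succ_lt hk
    have h1 : (⟨k, hk'⟩ : Fin m) < ⟨k + 1, hk⟩ := by simp [Fin.lt_def]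
    have h2 := hg h1
    rw [Fin.lt_def] at h2
    have h3 := ih hk'
    simp only [Fin.val_mk] at h2 h3 ⊢
    omega

lemma fin_sm_ub {m n : ℕ} (g : Fin m → Fin n) (hg : StrictMono g) (i : Fin m) :
    (g i : ℕ) ≤ (i : ℕ) + (n - m) := by
  have hg' : StrictMono (fun j : Fin m => (g j.rev).rev) := by
    intro a b hab
    exact Fin.rev_lt_rev.mpr (hg (Fin.rev_lt_rev.mpr hab))
  have h := fin_sm_le _ hg' i.rev
  simp only [Fin.rev_rev, Fin.val_rev] at h
  have := i.isLt
  have := (g i).isLt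
  omega

theorem stmt1 (f n m : ℕ) (P U : Multiset ℝ)
    (hn : n > 3 * f) (hm : m ≥ n - f)
    (hP : Multiset.card P = n) (hU : U ≤ P) (hUm : Multiset.card U = m) :
    mmin U ≤ nth P (n - f) ∧ nth P (n - f) ≤ mmax U := by
  set l := P.sort (· ≤ ·) with hl
  set u := U.sort (· ≤ ·) with hu
  have hls : l.Pairwise (· ≤ ·) := Multiset.pairwise_sort _ _
  have hus : u.Pairwise (· ≤ ·) := Multiset.pairwise_sort _ _
  have hsub : u.Sublist l := by
    refine List.sublist_of_subperm_of_pairwise ?_ hus hls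
    rw [← Multiset.coe_le, Multiset.sort_eq, Multiset.sort_eq]
    exact hU
  have hll : l.length = n := by rw [hl, Multiset.length_sort, hP]
  have hul : u.length = m := by rw [hu, Multiset.length_sort, hUm]
  obtain ⟨g, hg⟩ := List.sublist_iff_exists_fin_orderEmbedding_get_eq.mp hsub
  have hm1 : 0 < m := by omega
  have hnf : n - f - 1 < n := by omega
  have i0 : Fin u.length := ⟨0, by omega⟩
  have hnm : n - m ≤ f := by omega
  -- min bound
  have hmin : mmin U = u.get ⟨0, by omega⟩ := by
    rw [mmin, nth, ← hu]
    simp [List.getD_eq_getElem, hul, hm1]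
  have hmax : mmax U = u.get ⟨m - 1, by omega⟩ := by
    rw [mmax, nth, ← hu]
    simp [hUm, List.getD_eq_getElem, hul, Nat.sub_lt hm1]
  have hnth : nth P (n - f) = l.get ⟨n - f - 1, by omega⟩ := by
    rw [nth, ← hl]
    simp [List.getD_eq_getElem, hll, hnf]
  constructor
  · rw [hmin, hnth, hg ⟨0, by omega⟩]
    apply hls.rel_get_of_le
    have := fin_sm_ub g g.strictMono ⟨0, by omega⟩
    rw [Fin.le_def]
    simp only [Fin.val_mk] at this ⊢
    omega
  · rw [hmax, hnth, hg ⟨m - 1, by omega⟩]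
    apply hls.rel_get_of_le
    have := fin_sm_le g g.strictMono ⟨m - 1, by omega⟩
    rw [Fin.le_def]
    simp only [Fin.val_mk] at this ⊢
    omega
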